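/- arXiv:2302.13091 — 3 statements merged into one kernel-verified Lean document; each statement's English description precedes it below -/
import Mathlib

section
/- Symmetry property: if i, j ∈ N, i ≠ j, and for all S ⊆ N \ {i, j}, v(S ∪ {i}) = v(S ∪ {j}), then for all S ⊆ N \ {i, j}, I(S ∪ {i}) = I(S ∪ {j}). -/
open Finset

/-- The Harsanyi dividend of a game `v` on subsets of `Fin n`. -/
def harsanyi {n : ℕ} (v : Finset (Fin n) → ℝ) (S : Finset (Fin n)) : ℝ :=
  ∑ T ∈ S.powerset, (-1 : ℝ) ^ (S.card - T.card) * v T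

/-- Symmetry property: if `i` and `j` contribute to every coalition in the same way,
then `I(S ∪ {i}) = I(S ∪ {j})` for all `S ⊆ N \ {i, j}`. -/
theorem harsanyi_symmetry {n : ℕ} (v : Finset (Fin n) → ℝ) (i j : Fin n) (hij : i ≠ j)
    (hsym : ∀ S : Finset (Fin n), i ∉ S → j ∉ S → v (insert i S) = v (insert j S)) :
    ∀ S : Finset (Fin n), i ∉ S → j ∉ S →
      harsanyi v (insert i S) = harsanyi v (insert j S) := by
  intro S hi hj
  unfold harsanyi
  rw [Finset.sum_powerset_insert hi, Finset.sum_powerset_insert hj,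
    Finset.card_insert_of_notMem hi, Finset.card_insert_of_notMem hj]
  congr 1
  apply Finset.sum_congr rfl
  intro T hT
  rw [Finset.mem_powerset] at hT
  have hiT : i ∉ T := fun h => hi (hT h)
  have hjT : j ∉ T := fun h => hj (hT h)
  rw [Finset.card_insert_of_notMem hiT, Finset.card_insert_of_notMem hjT,
    hsym T hiT hjT]
end

section
/- Under the hypotheses of the previous statement with each ε_i having E[ε_i^2] = δ² > 0, the second-order moment E[π̂²] = Π_{i∈S} (1 + Σ_{m=1}^{κ_i} C(2κ_i,2m) τ^{-2m} E[ε_i^{2m}]) is at least (1 + κ_1_min·δ²/τ²)^{|S|} where each factor exceeds 1; in particular E[π̂²] grows at least exponentially in |S|: E[π̂²] ≥ (1 + δ²/τ²)^{|S|}. -/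
open MeasureTheory ProbabilityTheory Finset

/-- Integral of a finset product of independent measurable real random variables. -/
lemma integral_prod_indep_aux {Ω ι : Type*} [MeasurableSpace Ω] (μ : Measure Ω)
    [IsProbabilityMeasure μ] (g : ι → Ω → ℝ) (hmeas : ∀ i, Measurable (g i))
    (hindep : iIndepFun g μ) (s : Finset ι) :
    ∫ ω, ∏ i ∈ s, g i ω ∂μ = ∏ i ∈ s, ∫ ω, g i ω ∂μ := by
  induction s using Finset.cons_induction with
  | empty => simp
  | cons i s hi ih =>
    have hIndep : IndepFun (g i) (fun ω => ∏ j ∈ s, g j ω) μ := by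
      have h1 := (hindep.indepFun_finsetProd_of_notMem hmeas hi).symm
      have h2 : (∏ j ∈ s, g j) = fun ω => ∏ j ∈ s, g j ω := by
        ext ω; simp [Finset.prod_apply]
      rwa [h2] at h1
    have hprodmeas : Measurable (fun ω => ∏ j ∈ s, g j ω) :=
      Finset.measurable_prod s (fun j _ => hmeas j)
    rw [Finset.prod_cons]
    calc ∫ ω, ∏ j ∈ Finset.cons i s hi, g j ω ∂μ
        = ∫ ω, g i ω * ∏ j ∈ s, g j ω ∂μ := by
          congr 1; ext ω; rw [Finset.prod_cons]
      _ = (∫ ω, g i ω ∂μ) * ∫ ω, ∏ j ∈ s, g j ω ∂μ :=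
          hIndep.integral_mul_eq_mul_integral (hmeas i).aestronglyMeasurable
            hprodmeas.aestronglyMeasurable
      _ = (∫ ω, g i ω ∂μ) * ∏ j ∈ s, ∫ ω, g j ω ∂μ := by rw [ih]

/-- Per-factor second-moment lower bound. -/
lemma factor_bound_aux {Ω : Type*} [MeasurableSpace Ω] (μ : Measure Ω)
    [IsProbabilityMeasure μ] (X : Ω → ℝ)
    (hint : ∀ m : ℕ, Integrable (fun ω => X ω ^ m) μ)
    (hodd : ∀ m : ℕ, ∫ ω, X ω ^ (2 * m + 1) ∂μ = 0)
    (κ : ℕ) (hκ : 1 ≤ κ) (τ : ℝ) (hτ : 0 < τ) (δ : ℝ) (hδ : 0 < δ)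
    (hvar : ∫ ω, X ω ^ 2 ∂μ = δ ^ 2) :
    1 + δ ^ 2 / τ ^ 2 ≤ ∫ ω, (1 + X ω / τ) ^ (2 * κ) ∂μ := by
  set N := 2 * κ with hN
  have hsum : ∫ ω, (1 + X ω / τ) ^ N ∂μ
      = ∑ k ∈ Finset.range (N + 1), ((N.choose k : ℝ) / τ ^ k) * ∫ ω, X ω ^ k ∂μ := by
    have h1 : ∀ ω, (1 + X ω / τ) ^ N
        = ∑ k ∈ Finset.range (N + 1), ((N.choose k : ℝ) / τ ^ k) * X ω ^ k := by
      intro ω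
      rw [add_comm, add_pow]
      refine Finset.sum_congr rfl fun k _ => ?_
      rw [div_pow]
      ring
    calc ∫ ω, (1 + X ω / τ) ^ N ∂μ
        = ∫ ω, ∑ k ∈ Finset.range (N + 1), ((N.choose k : ℝ) / τ ^ k) * X ω ^ k ∂μ := by
          congr 1; ext ω; exact h1 ω
      _ = ∑ k ∈ Finset.range (N + 1), ∫ ω, ((N.choose k : ℝ) / τ ^ k) * X ω ^ k ∂μ :=
          integral_finset_sum _ (fun k _ => (hint k).const_mul _)
      _ = ∑ k ∈ Finset.range (N + 1), ((N.choose k : ℝ) / τ ^ k) * ∫ ω, X ω ^ k ∂μ := by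
          refine Finset.sum_congr rfl fun k _ => ?_
          rw [integral_const_mul]
  rw [hsum]
  have hnn : ∀ k ∈ Finset.range (N + 1),
      0 ≤ ((N.choose k : ℝ) / τ ^ k) * ∫ ω, X ω ^ k ∂μ := by
    intro k _
    rcases Nat.even_or_odd k with ⟨m, hm⟩ | ⟨m, hm⟩
    · have hI : 0 ≤ ∫ ω, X ω ^ k ∂μ := by
        apply integral_nonneg
        intro ω
        show (0:ℝ) ≤ X ω ^ k
        have : X ω ^ k = (X ω ^ m) ^ 2 := by rw [← pow_mul]; congr 1; omega
        rw [this]; positivity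
      have : (0:ℝ) ≤ (N.choose k : ℝ) / τ ^ k := by positivity
      exact mul_nonneg this hI
    · have : k = 2 * m + 1 := by omega
      rw [this, hodd m, mul_zero]
  have hsub : ({0, 2} : Finset ℕ) ⊆ Finset.range (N + 1) := by
    intro k hk
    simp only [Finset.mem_insert, Finset.mem_singleton] at hk
    rcases hk with rfl | rfl <;> simp [hN] <;> omega
  have hle : ∑ k ∈ ({0, 2} : Finset ℕ), ((N.choose k : ℝ) / τ ^ k) * ∫ ω, X ω ^ k ∂μ
      ≤ ∑ k ∈ Finset.range (N + 1), ((N.choose k : ℝ) / τ ^ k) * ∫ ω, X ω ^ k ∂μ :=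
    Finset.sum_le_sum_of_subset_of_nonneg hsub (fun k hk _ => hnn k hk)
  refine le_trans ?_ hle
  have h02 : ∑ k ∈ ({0, 2} : Finset ℕ), ((N.choose k : ℝ) / τ ^ k) * ∫ ω, X ω ^ k ∂μ
      = 1 + ((N.choose 2 : ℝ) / τ ^ 2) * δ ^ 2 := by
    rw [Finset.sum_pair (by norm_num)]
    have h0 : ∫ ω, X ω ^ 0 ∂μ = 1 := by simp
    rw [h0, hvar]
    simp
  rw [h02]
  have hchoose : (1 : ℝ) ≤ (N.choose 2 : ℝ) := by
    have : 0 < N.choose 2 := Nat.choose_pos (by omega)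
    exact_mod_cast this
  have hτ2 : (0:ℝ) < τ ^ 2 := by positivity
  have : δ ^ 2 / τ ^ 2 ≤ ((N.choose 2 : ℝ) / τ ^ 2) * δ ^ 2 := by
    rw [div_mul_eq_mul_div, div_le_div_iff₀ hτ2 hτ2]
    nlinarith [mul_nonneg (sq_nonneg δ) (sq_nonneg τ), hchoose]
  linarith

/-- Exponential growth of the second-order moment with the order `|S|`: under the same
hypotheses as before, with each `E[ε_i²] = δ² > 0`, one has
`E[π̂²] ≥ (1 + δ²/τ²)^{|S|}`. -/
theorem and_interaction_second_moment_exponential {n : ℕ} {Ω : Type*} [MeasurableSpace Ω]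
    (μ : Measure Ω) [IsProbabilityMeasure μ] (ε : Fin n → Ω → ℝ)
    (hmeas : ∀ i, Measurable (ε i))
    (hindep : iIndepFun ε μ)
    (hint : ∀ i, ∀ m : ℕ, Integrable (fun ω => ε i ω ^ m) μ)
    (hodd : ∀ i, ∀ m : ℕ, ∫ ω, ε i ω ^ (2 * m + 1) ∂μ = 0)
    (S : Finset (Fin n)) (κ : Fin n → ℕ) (hκ : ∀ i ∈ S, 1 ≤ κ i)
    (τ : ℝ) (hτ : 0 < τ) (δ : ℝ) (hδ : 0 < δ)
    (hvar : ∀ i, ∫ ω, ε i ω ^ 2 ∂μ = δ ^ 2) :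
    (1 + δ ^ 2 / τ ^ 2) ^ S.card ≤
      ∫ ω, (∏ i ∈ S, (1 + ε i ω / τ) ^ (κ i)) ^ 2 ∂μ := by
  set g : Fin n → Ω → ℝ := fun i ω => (1 + ε i ω / τ) ^ (2 * κ i) with hg
  have hgmeas : ∀ i, Measurable (g i) := fun i =>
    (((hmeas i).div_const τ).const_add 1).pow_const _
  have hgindep : iIndepFun g μ := by
    have := hindep.comp (fun i (x : ℝ) => (1 + x / τ) ^ (2 * κ i))
      (fun i => ((measurable_id.div_const τ).const_add 1).pow_const _)
    exact this
  have hrw : ∫ ω, (∏ i ∈ S, (1 + ε i ω / τ) ^ (κ i)) ^ 2 ∂μ = ∫ ω, ∏ i ∈ S, g i ω ∂μ := by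
    congr 1; ext ω
    rw [← Finset.prod_pow]
    refine Finset.prod_congr rfl fun i _ => ?_
    rw [← pow_mul, mul_comm]
  rw [hrw, integral_prod_indep_aux μ g hgmeas hgindep S]
  calc (1 + δ ^ 2 / τ ^ 2) ^ S.card = ∏ _i ∈ S, (1 + δ ^ 2 / τ ^ 2) := by
        rw [Finset.prod_const]
    _ ≤ ∏ i ∈ S, ∫ ω, g i ω ∂μ := by
        refine Finset.prod_le_prod (fun i _ => by positivity) (fun i hi => ?_)
        exact factor_bound_aux μ (ε i) (hint i) (hodd i) (κ i) (hκ i hi) τ hτ δ hδ (hvar i)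
end

section
/- For a multivariate polynomial v : ℝⁿ → ℝ and baseline b ∈ ℝⁿ, the Harsanyi dividend of the masked inputs equals the sum of the Taylor coefficients supported exactly on S: I(S|x) = Σ_{κ ∈ Q_S} C(κ)·∇_v(κ)·Π_{i=1}^n (x_i − b_i)^{κ_i}, where Q_S = {κ ∈ ℕⁿ : κ_i ≥ 1 for i ∈ S, κ_i = 0 for i ∉ S}, I(S|x) = Σ_{T ⊆ S} (-1)^{|S|-|T|} v(x_T), and x_T has (x_T)_i = x_i for i ∈ T and (x_T)_i = b_i otherwise. -/
open Finset

/-- The masked sample `x_T`: coordinates in `T` keep their value, others are set to the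
baseline `b`. -/
def mask {n : ℕ} (x b : Fin n → ℝ) (T : Finset (Fin n)) : Fin n → ℝ :=
  fun i => if i ∈ T then x i else b i

lemma aux_alt {n : ℕ} (K S : Finset (Fin n)) :
    ∑ T ∈ S.powerset.filter (fun T => K ⊆ T), (-1 : ℝ) ^ (S.card - T.card) =
      if K = S then 1 else 0 := by
  by_cases hKS : K ⊆ S
  · have key : ∑ T ∈ S.powerset.filter (fun T => K ⊆ T), (-1 : ℝ) ^ (S.card - T.card)
        = ∑ U ∈ (S \ K).powerset, (-1 : ℝ) ^ U.card := by
      refine Finset.sum_bij' (fun T _ => S \ T) (fun U _ => S \ U) ?_ ?_ ?_ ?_ ?_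
      · intro T hT
        simp only [mem_filter, mem_powerset] at hT ⊢
        exact sdiff_subset_sdiff le_rfl hT.2
      · intro U hU
        simp only [mem_powerset] at hU
        simp only [mem_filter, mem_powerset]
        refine ⟨sdiff_subset, fun i hi => ?_⟩
        have h1 : i ∈ S := hKS hi
        have h2 : i ∉ U := fun h => (Finset.mem_sdiff.mp (hU h)).2 hi
        exact Finset.mem_sdiff.mpr ⟨h1, h2⟩
      · intro T hT
        simp only [mem_filter, mem_powerset] at hT
        exact Finset.sdiff_sdiff_eq_self hT.1
      · intro U hU
        simp only [mem_powerset] at hU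
        exact Finset.sdiff_sdiff_eq_self (hU.trans sdiff_subset)
      · intro T hT
        simp only [mem_filter, mem_powerset] at hT
        rw [Finset.card_sdiff_of_subset hT.1]
    rw [key]
    have := @Finset.sum_powerset_neg_one_pow_card (Fin n) _ (S \ K)
    have h2 : ((∑ m ∈ (S \ K).powerset, (-1 : ℤ) ^ m.card : ℤ) : ℝ)
        = ∑ U ∈ (S \ K).powerset, (-1 : ℝ) ^ U.card := by push_cast; rfl
    rw [← h2, this]
    have : S \ K = ∅ ↔ K = S := by
      rw [Finset.sdiff_eq_empty_iff_subset]
      exact ⟨fun h => le_antisymm hKS h, fun h => h ▸ le_rfl⟩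
    by_cases h : K = S <;> simp [this, h]
  · have : S.powerset.filter (fun T => K ⊆ T) = ∅ := by
      ext T
      simp only [mem_filter, mem_powerset, Finset.notMem_empty, iff_false]
      rintro ⟨h1, h2⟩
      exact hKS (h2.trans h1)
    rw [this]
    have hne : K ≠ S := fun h => hKS (h ▸ le_rfl)
    simp [hne]

/-- Theorem 1, Eq. (5): for a (finite) Taylor expansion of `v` at the baseline `b` with
coefficients `a κ` (i.e. `v(y) = Σ_κ a κ · Π_i (y_i − b_i)^{κ_i}`), the Harsanyi dividend
of the masked inputs equals the sum of Taylor terms whose degree vectors are supported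
exactly on `S`. -/
theorem harsanyi_taylor {n : ℕ} (a : (Fin n → ℕ) →₀ ℝ) (b x : Fin n → ℝ)
    (v : (Fin n → ℝ) → ℝ)
    (hv : ∀ y : Fin n → ℝ, v y = ∑ κ ∈ a.support, a κ * ∏ i, (y i - b i) ^ (κ i))
    (S : Finset (Fin n)) :
    ∑ T ∈ S.powerset, (-1 : ℝ) ^ (S.card - T.card) * v (mask x b T) =
      ∑ κ ∈ a.support.filter (fun κ => ∀ i, (0 < κ i ↔ i ∈ S)),
        a κ * ∏ i, (x i - b i) ^ (κ i) := by
  -- key product formula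
  have hprod : ∀ (κ : Fin n → ℕ) (T : Finset (Fin n)),
      ∏ i, (mask x b T i - b i) ^ (κ i)
        = if (Finset.univ.filter fun i => 0 < κ i) ⊆ T then
            ∏ i, (x i - b i) ^ (κ i) else 0 := by
    intro κ T
    by_cases h : (Finset.univ.filter fun i => 0 < κ i) ⊆ T
    · rw [if_pos h]
      refine Finset.prod_congr rfl fun i _ => ?_
      by_cases hiT : i ∈ T
      · simp [mask, hiT]
      · have : κ i = 0 := by
          by_contra hκ
          exact hiT (h (Finset.mem_filter.mpr ⟨Finset.mem_univ i, Nat.pos_of_ne_zero hκ⟩))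
        simp [this]
    · rw [if_neg h]
      obtain ⟨i, hiK, hiT⟩ := Finset.not_subset.mp h
      have hκ : 0 < κ i := (Finset.mem_filter.mp hiK).2
      refine Finset.prod_eq_zero (Finset.mem_univ i) ?_
      simp [mask, hiT, hκ.ne', sub_self, zero_pow]
  calc ∑ T ∈ S.powerset, (-1 : ℝ) ^ (S.card - T.card) * v (mask x b T)
      = ∑ T ∈ S.powerset, ∑ κ ∈ a.support,
          (-1 : ℝ) ^ (S.card - T.card) * (a κ * ∏ i, (mask x b T i - b i) ^ (κ i)) := by
        refine Finset.sum_congr rfl fun T _ => ?_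
        rw [hv, Finset.mul_sum]
    _ = ∑ κ ∈ a.support, ∑ T ∈ S.powerset,
          (-1 : ℝ) ^ (S.card - T.card) * (a κ * ∏ i, (mask x b T i - b i) ^ (κ i)) :=
        Finset.sum_comm
    _ = ∑ κ ∈ a.support,
          a κ * (∏ i, (x i - b i) ^ (κ i)) *
            (if (Finset.univ.filter fun i => 0 < κ i) = S then 1 else 0) := by
        refine Finset.sum_congr rfl fun κ _ => ?_
        rw [← aux_alt (Finset.univ.filter fun i => 0 < κ i) S, Finset.sum_filter,
          Finset.mul_sum]
        refine Finset.sum_congr rfl fun T _ => ?_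
        rw [hprod]
        by_cases h : (Finset.univ.filter fun i => 0 < κ i) ⊆ T <;> simp [h] <;> ring
    _ = ∑ κ ∈ a.support.filter (fun κ => ∀ i, (0 < κ i ↔ i ∈ S)),
          a κ * ∏ i, (x i - b i) ^ (κ i) := by
        rw [Finset.sum_filter]
        refine Finset.sum_congr rfl fun κ _ => ?_
        have hiff : ((Finset.univ.filter fun i => 0 < κ i) = S) ↔ (∀ i, (0 < κ i ↔ i ∈ S)) := by
          constructor
          · intro h i
            rw [← h, Finset.mem_filter]
            simp
          · intro h
            ext i
            simp [Finset.mem_filter, h i]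
        by_cases h : ∀ i, (0 < κ i ↔ i ∈ S) <;> simp [hiff, h]
end
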